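/- Let X, Y be compact Hausdorff spaces and E, F Banach spaces over 𝕂 ∈ {ℝ, ℂ} such that S(F) contains a point v for which {v} is a maximal convex subset of S(F), and S(E) contains a point u for which {u} is a maximal convex subset of S(E). Let A be a closed 𝕂-linear subspace of C(X,E) with Θ(A) = X and B a 𝕂-linear subspace of C(Y,F) with Θ(B) = Y. Then for any surjective (not necessarily linear) isometry T : A → B there exist a homeomorphism Φ : Y → X and a family {V_y}_{y∈Y} of surjective real-linear isometries from E onto F such that Tf(y) = T0(y) + V_y(f(Φ(y))) for all f ∈ A and all y ∈ Y. -/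

import Mathlib

open Set Metric

variable {𝕂 : Type*} [RCLike 𝕂]
variable {X : Type*} [TopologicalSpace X] [CompactSpace X] [T2Space X]
variable {Y : Type*} [TopologicalSpace Y] [CompactSpace Y] [T2Space Y]
variable {E : Type*} [NormedAddCommGroup E] [NormedSpace ℝ E] [NormedSpace 𝕂 E]
  [IsScalarTower ℝ 𝕂 E] [CompleteSpace E]
variable {F : Type*} [NormedAddCommGroup F] [NormedSpace ℝ F] [NormedSpace 𝕂 F]
  [IsScalarTower ℝ 𝕂 F] [CompleteSpace F]

/-- `C` is a maximal convex subset of `S` (convexity over `ℝ`). -/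
def MaxConvexIn {M : Type*} [AddCommGroup M] [Module ℝ M] (S C : Set M) : Prop :=
  C ⊆ S ∧ Convex ℝ C ∧ ∀ C' : Set M, C' ⊆ S → Convex ℝ C' → C ⊆ C' → C' = C

/-- The set `Θ(A)` of strong boundary points of a set `A` of functions in `C(X,E)`. -/
def strongBoundaryPoints {Z M : Type*} [TopologicalSpace Z] [CompactSpace Z]
    [NormedAddCommGroup M] (A : Set C(Z, M)) : Set Z :=
  {x | ∀ U ∈ nhds x, ∀ ε : ℝ, 0 < ε → ∀ u : M, ‖u‖ = 1 →
    ∃ f ∈ A, ‖f‖ = 1 ∧ f x = u ∧ ∀ y, y ∉ U → ‖f y‖ < ε}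


set_option linter.unusedSectionVars false
set_option maxHeartbeats 1000000

section Geometry
variable {G : Type*} [NormedAddCommGroup G] [NormedSpace ℝ G]

lemma segment_subset_sphere {a b : G} (ha : ‖a‖ = 1) (hb : ‖b‖ = 1)
    (hab : ‖a + b‖ = 2) : segment ℝ a b ⊆ sphere (0 : G) 1 := by
  rintro z ⟨s, t, hs, ht, hst, rfl⟩
  rw [mem_sphere_zero_iff_norm]
  have hle : ‖s • a + t • b‖ ≤ 1 := by
    calc ‖s • a + t • b‖ ≤ ‖s • a‖ + ‖t • b‖ := norm_add_le _ _
    _ = s + t := by rw [norm_smul, norm_smul, Real.norm_of_nonneg hs,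
        Real.norm_of_nonneg ht, ha, hb]; ring
    _ = 1 := hst
  refine le_antisymm hle ?_
  rcases le_total s t with h | h
  · have ht' : (0:ℝ) < t := by linarith
    have hdec : a + b = (1/t) • (s • a + t • b) + ((t-s)/t) • a := by
      rw [smul_add, smul_smul, smul_smul]
      rw [add_comm ((1/t * s) • a), add_assoc, ← add_smul]
      have e1 : (1/t * t) = 1 := by field_simp
      have e2 : (1/t * s + (t-s)/t) = 1 := by field_simp; ring
      rw [e1, e2, one_smul, one_smul, add_comm]
    have hchain : (2:ℝ) ≤ (‖s • a + t • b‖ + (t - s)) / t := by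
      calc (2:ℝ) = ‖a + b‖ := hab.symm
      _ ≤ ‖(1/t) • (s • a + t • b)‖ + ‖((t-s)/t) • a‖ := by rw [hdec]; exact norm_add_le _ _
      _ = (1/t) * ‖s • a + t • b‖ + (t-s)/t := by
          rw [norm_smul, norm_smul, ha, Real.norm_of_nonneg (by positivity),
            Real.norm_of_nonneg (by apply div_nonneg <;> linarith)]; ring
      _ = (‖s • a + t • b‖ + (t - s)) / t := by field_simp
    have := (le_div_iff₀ ht').mp hchain
    linarith
  · have hs' : (0:ℝ) < s := by linarith
    have hdec : a + b = (1/s) • (s • a + t • b) + ((s-t)/s) • b := by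
      rw [smul_add, smul_smul, smul_smul, add_assoc, ← add_smul]
      have e1 : (1/s * s) = 1 := by field_simp
      have e2 : (1/s * t + (s-t)/s) = 1 := by field_simp; ring
      rw [e1, e2, one_smul, one_smul]
    have hchain : (2:ℝ) ≤ (‖s • a + t • b‖ + (s - t)) / s := by
      calc (2:ℝ) = ‖a + b‖ := hab.symm
      _ ≤ ‖(1/s) • (s • a + t • b)‖ + ‖((s-t)/s) • b‖ := by rw [hdec]; exact norm_add_le _ _
      _ = (1/s) * ‖s • a + t • b‖ + (s-t)/s := by
          rw [norm_smul, norm_smul, hb, Real.norm_of_nonneg (by positivity),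
            Real.norm_of_nonneg (by apply div_nonneg <;> linarith)]; ring
      _ = (‖s • a + t • b‖ + (s - t)) / s := by field_simp
    have := (le_div_iff₀ hs').mp hchain
    linarith

lemma MaxConvexIn.norm_eq_one {v : G} (hv : MaxConvexIn (sphere (0 : G) 1) {v}) :
    ‖v‖ = 1 := by
  have := hv.1 (mem_singleton v); rwa [mem_sphere_zero_iff_norm] at this

/-- If `{v}` is maximal convex in the sphere and `a + b = v + v` with `a, b` in the ball,
then `a = v`. -/
lemma MaxConvexIn.eq_of_add {v a b : G} (hv : MaxConvexIn (sphere (0 : G) 1) {v})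
    (ha : ‖a‖ ≤ 1) (hb : ‖b‖ ≤ 1) (hab : a + b = v + v) : a = v := by
  have hvn : ‖v‖ = 1 := hv.norm_eq_one
  have hsum : ‖a + b‖ = 2 := by
    rw [hab]
    calc ‖v + v‖ = ‖(2:ℝ) • v‖ := by rw [two_smul]
    _ = 2 := by rw [norm_smul, hvn]; norm_num
  have hab2 : (2:ℝ) ≤ ‖a‖ + ‖b‖ := hsum ▸ norm_add_le a b
  have ha1 : ‖a‖ = 1 := by linarith
  have hb1 : ‖b‖ = 1 := by linarith
  have hseg := segment_subset_sphere ha1 hb1 hsum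
  have hvm : v ∈ segment ℝ a b := by
    refine ⟨1/2, 1/2, by norm_num, by norm_num, by norm_num, ?_⟩
    rw [← smul_add, hab, smul_add]
    rw [← add_smul]
    norm_num
  have heq := hv.2.2 (segment ℝ a b) hseg (convex_segment a b)
    (singleton_subset_iff.mpr hvm)
  have hm : a ∈ segment ℝ a b := left_mem_segment ℝ a b
  rw [heq] at hm
  exact hm

lemma MaxConvexIn.star {v w : G} (hv : MaxConvexIn (sphere (0 : G) 1) {v})
    (hw : ‖w‖ ≤ 1) (h : ‖v + w‖ = 2) : w = v := by
  have hvn : ‖v‖ = 1 := hv.norm_eq_one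
  have h2 : (2:ℝ) ≤ ‖v‖ + ‖w‖ := h ▸ norm_add_le v w
  have hw1 : ‖w‖ = 1 := by linarith
  have hseg := segment_subset_sphere hvn hw1 h
  have heq := hv.2.2 (segment ℝ v w) hseg (convex_segment v w)
    (singleton_subset_iff.mpr (left_mem_segment ℝ v w))
  have hm : w ∈ segment ℝ v w := right_mem_segment ℝ v w
  rw [heq] at hm
  exact hm

lemma MaxConvexIn.extreme {v w : G} (hv : MaxConvexIn (sphere (0 : G) 1) {v})
    (h1 : ‖v + w‖ ≤ 1) (h2 : ‖v - w‖ ≤ 1) : w = 0 := by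
  have hadd : (v + w) + (v - w) = v + v := by abel
  have := hv.eq_of_add h1 h2 hadd
  simpa using this

end Geometry

section Helpers
variable {Z : Type*} [TopologicalSpace Z] [CompactSpace Z]
variable {M : Type*} [NormedAddCommGroup M] [NormedSpace ℝ M] [NormedSpace 𝕂 M]
  [IsScalarTower ℝ 𝕂 M]

lemma exists_norm_apply_eq [Nonempty Z] (f : C(Z, M)) : ∃ x, ‖f x‖ = ‖f‖ := by
  obtain ⟨x, -, hx⟩ := isCompact_univ.exists_isMaxOn univ_nonempty
    (continuous_norm.comp f.continuous).continuousOn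
  exact ⟨x, le_antisymm (f.norm_coe_le_norm x)
    ((f.norm_le (norm_nonneg _)).mpr (fun x' => hx (mem_univ x')))⟩

variable {P : Subspace 𝕂 C(Z, M)}

lemma normP_smul (r : ℝ) (f : ↥P) : ‖r • f‖ = |r| * ‖f‖ := by
  have h : ‖r • f‖ = ‖r • (f : C(Z, M))‖ := rfl
  rw [h, norm_smul, Real.norm_eq_abs]
  rfl

lemma coeP_smul (r : ℝ) (f : ↥P) : ((r • f : ↥P) : C(Z, M)) = r • (f : C(Z, M)) := rfl

lemma coeP_add (f g : ↥P) : ((f + g : ↥P) : C(Z, M)) = (f : C(Z, M)) + g := rfl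

lemma coeP_sub (f g : ↥P) : ((f - g : ↥P) : C(Z, M)) = (f : C(Z, M)) - g := rfl

lemma normP_coe (f : ↥P) : ‖(f : C(Z, M))‖ = ‖f‖ := rfl

lemma theta_spec (hΘ : strongBoundaryPoints (P : Set C(Z, M)) = Set.univ)
    (x : Z) {U : Set Z} (hU : U ∈ nhds x) {ε : ℝ} (hε : 0 < ε) {w : M}
    (hw : ‖w‖ = 1) :
    ∃ f : ↥P, ‖f‖ = 1 ∧ (f : C(Z, M)) x = w ∧
      ∀ x', x' ∉ U → ‖(f : C(Z, M)) x'‖ < ε := by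
  have hx : x ∈ strongBoundaryPoints (P : Set C(Z, M)) := hΘ ▸ Set.mem_univ x
  obtain ⟨f, hfA, h1, h2, h3⟩ := hx U hU ε hε w hw
  exact ⟨⟨f, hfA⟩, h1, h2, h3⟩

lemma exists_eq_at (hΘ : strongBoundaryPoints (P : Set C(Z, M)) = Set.univ)
    (x : Z) (w : M) : ∃ f : ↥P, (f : C(Z, M)) x = w ∧ ‖f‖ = ‖w‖ := by
  rcases eq_or_ne w 0 with rfl | hw
  · exact ⟨0, by simp, by simp⟩
  · have hw' : ‖w‖ ≠ 0 := norm_ne_zero_iff.mpr hw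
    have hunit : ‖‖w‖⁻¹ • w‖ = 1 := by
      rw [norm_smul, norm_inv, norm_norm]
      field_simp
    obtain ⟨f, hf1, hf2, -⟩ := theta_spec hΘ x (Filter.univ_mem) one_pos hunit
    refine ⟨(‖w‖ : ℝ) • f, ?_, ?_⟩
    · rw [coeP_smul]
      simp only [ContinuousMap.smul_apply, hf2, smul_smul]
      field_simp
      rw [one_smul]
    · rw [normP_smul, hf1, abs_of_nonneg (norm_nonneg w), mul_one]

end Helpers

section MainAux
variable {A : Subspace 𝕂 C(X, E)} {B : Subspace 𝕂 C(Y, F)}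
variable (S : ↥A ≃ₗᵢ[ℝ] ↥B)

/-- The set of norm-≤1 elements of `A` whose image under `S` takes value `v` at `y`. -/
def Fset (v : F) (y : Y) : Set ↥A :=
  {f | ‖f‖ ≤ 1 ∧ ((S f : ↥B) : C(Y, F)) y = v}

/-- The set of points of `X` where every member of `Fset S v y` has norm one. -/
def Kset (v : F) (y : Y) : Set X :=
  {x | ∀ f ∈ Fset S v y, ‖(f : C(X, E)) x‖ = 1}

variable {v : F} {u : E}

lemma Fset_nonempty (hΘB : strongBoundaryPoints (B : Set C(Y, F)) = Set.univ)
    (hvn : ‖v‖ = 1) (y : Y) : (Fset S v y).Nonempty := by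
  obtain ⟨g, hg1, hg2, -⟩ := theta_spec hΘB y (Filter.univ_mem) one_pos hvn
  refine ⟨S.symm g, ?_, ?_⟩
  · rw [LinearIsometryEquiv.norm_map, hg1]
  · rw [S.apply_symm_apply]; exact hg2

lemma midpoint_mem_Fset {y : Y} {f f' : ↥A} (hf : f ∈ Fset S v y)
    (hf' : f' ∈ Fset S v y) : (2⁻¹ : ℝ) • (f + f') ∈ Fset S v y := by
  obtain ⟨hf1, hf2⟩ := hf
  obtain ⟨hf'1, hf'2⟩ := hf'
  constructor
  · rw [normP_smul]
    have := norm_add_le f f'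
    rw [abs_of_nonneg (by norm_num : (0:ℝ) ≤ 2⁻¹)]
    nlinarith [norm_nonneg (f + f')]
  · have hmap : S ((2⁻¹ : ℝ) • (f + f')) = (2⁻¹ : ℝ) • (S f + S f') := by
      rw [map_smul, map_add]
    show ((S ((2⁻¹ : ℝ) • (f + f')) : ↥B) : C(Y, F)) y = v
    rw [hmap, coeP_smul, coeP_add]
    simp only [ContinuousMap.smul_apply, ContinuousMap.add_apply, hf2, hf'2]
    rw [← one_smul ℝ v, smul_add, ← add_smul, smul_smul]
    norm_num

lemma norm_add_eq_two_of_mem_Fset {y : Y} {f f' : ↥A} (hf : f ∈ Fset S v y)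
    (hf' : f' ∈ Fset S v y) (hvn : ‖v‖ = 1) : ‖f + f'‖ = 2 := by
  have hle : ‖f + f'‖ ≤ 2 := by
    have := norm_add_le f f'
    linarith [hf.1, hf'.1]
  refine le_antisymm hle ?_
  have h1 : ‖f + f'‖ = ‖S (f + f')‖ := (S.norm_map _).symm
  have h3 : ‖((S (f + f') : ↥B) : C(Y, F)) y‖ ≤ ‖((S (f + f') : ↥B) : C(Y, F))‖ :=
    ContinuousMap.norm_coe_le_norm _ y
  have h4 : ((S (f + f') : ↥B) : C(Y, F)) y = v + v := by
    rw [map_add, coeP_add, ContinuousMap.add_apply, hf.2, hf'.2]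
  have h5 : ‖v + v‖ = 2 := by
    rw [← two_smul ℝ v, norm_smul, hvn]; norm_num
  rw [h1, ← normP_coe]
  rw [h4, h5] at h3
  exact h3

lemma norm_one_of_mem_Fset {y : Y} {f : ↥A} (hf : f ∈ Fset S v y)
    (hvn : ‖v‖ = 1) : ‖f‖ = 1 := by
  have h := norm_add_eq_two_of_mem_Fset S hf hf hvn
  have h2 : ‖f + f‖ = 2 * ‖f‖ := by
    rw [← two_smul ℝ f, normP_smul]; simp
  rw [h2] at h; linarith

lemma Kset_nonempty [Nonempty X]
    (hΘB : strongBoundaryPoints (B : Set C(Y, F)) = Set.univ)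
    (hvn : ‖v‖ = 1) (y : Y) : (Kset S v y).Nonempty := by
  have hne : (Fset S v y).Nonempty := Fset_nonempty S hΘB hvn y
  haveI : Nonempty (Fset S v y) := hne.to_subtype
  set Z : Fset S v y → Set X :=
    fun f => {x | ‖((f : ↥A) : C(X, E)) x‖ = 1} with hZ
  have hcl : ∀ f, IsClosed (Z f) := fun f =>
    isClosed_eq (continuous_norm.comp (map_continuous _)) continuous_const
  have hcp : ∀ f, IsCompact (Z f) := fun f => (hcl f).isCompact
  have hn : ∀ f, (Z f).Nonempty := by
    intro f
    obtain ⟨x, hx⟩ := exists_norm_apply_eq ((f : ↥A) : C(X, E))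
    exact ⟨x, by rw [mem_setOf_eq, hx, normP_coe, norm_one_of_mem_Fset S f.2 hvn]⟩
  have hd : Directed (· ⊇ ·) Z := by
    intro f g
    refine ⟨⟨(2⁻¹ : ℝ) • ((f : ↥A) + g), midpoint_mem_Fset S f.2 g.2⟩, ?_, ?_⟩ <;>
    · intro x hx
      rw [hZ, mem_setOf_eq, coeP_smul, coeP_add] at hx
      simp only [ContinuousMap.smul_apply, ContinuousMap.add_apply, norm_smul] at hx
      have hsum : ‖((f:↥A) : C(X,E)) x + ((g:↥A) : C(X,E)) x‖ = 2 := by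
        rw [Real.norm_eq_abs, abs_of_nonneg (by norm_num : (0:ℝ) ≤ 2⁻¹)] at hx
        linarith
      have h1 : ‖((f:↥A) : C(X,E)) x‖ ≤ 1 := by
        refine le_trans (ContinuousMap.norm_coe_le_norm _ x) ?_
        rw [normP_coe]; exact f.2.1
      have h2 : ‖((g:↥A) : C(X,E)) x‖ ≤ 1 := by
        refine le_trans (ContinuousMap.norm_coe_le_norm _ x) ?_
        rw [normP_coe]; exact g.2.1
      have := norm_add_le (((f:↥A) : C(X,E)) x) (((g:↥A) : C(X,E)) x)
      show _ = (1:ℝ)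
      linarith
  obtain ⟨x, hx⟩ := IsCompact.nonempty_iInter_of_directed_nonempty_isCompact_isClosed
    Z hd hn hcp hcl
  refine ⟨x, fun f hf => ?_⟩
  have := mem_iInter.mp hx ⟨f, hf⟩
  exact this

lemma char (hΘB : strongBoundaryPoints (B : Set C(Y, F)) = Set.univ)
    (hv : MaxConvexIn (sphere (0 : F) 1) {v}) [Nonempty Y]
    {y : Y} {f : ↥A} (hf : ‖f‖ ≤ 1)
    (h : ∀ f' ∈ Fset S v y, ‖f + f'‖ = 2) :
    ((S f : ↥B) : C(Y, F)) y = v := by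
  have hvn : ‖v‖ = 1 := by
    have := hv.1 (mem_singleton v); rwa [mem_sphere_zero_iff_norm] at this
  set g : C(Y, F) := ((S f : ↥B) : C(Y, F)) with hg
  have hgle : ‖g‖ ≤ 1 := by
    rw [hg, normP_coe, LinearIsometryEquiv.norm_map]; exact hf
  have hB : ∀ g' : ↥B, ‖g'‖ ≤ 1 → (g' : C(Y, F)) y = v →
      ‖g + (g' : C(Y, F))‖ = 2 := by
    intro g' hg'1 hg'2
    have hf' : S.symm g' ∈ Fset S v y := by
      refine ⟨by rw [LinearIsometryEquiv.norm_map]; exact hg'1, ?_⟩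
      rw [S.apply_symm_apply]; exact hg'2
    have h2 := h _ hf'
    calc ‖g + (g' : C(Y, F))‖ = ‖S f + g'‖ := by rw [hg, ← coeP_add, normP_coe]
    _ = ‖S f + S (S.symm g')‖ := by rw [S.apply_symm_apply]
    _ = ‖S (f + S.symm g')‖ := by rw [map_add]
    _ = ‖f + S.symm g'‖ := S.norm_map _
    _ = 2 := h2
  obtain ⟨gs, hgs1, hgs2, -⟩ := theta_spec hΘB y (Filter.univ_mem) one_pos hvn
  set D := {z : Y | ‖g z + (gs : C(Y, F)) z‖ = 2} with hD
  have hDcl : IsClosed D := isClosed_eq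
    (continuous_norm.comp ((map_continuous g).add (map_continuous _))) continuous_const
  have hyD : y ∈ D := by
    have hcls : y ∈ closure D := by
      rw [mem_closure_iff_nhds]
      intro U hU
      obtain ⟨gU, hU1, hU2, hU3⟩ := theta_spec hΘB y hU
        (by norm_num : (0:ℝ) < 2⁻¹) hvn
      set gmid : ↥B := (2⁻¹ : ℝ) • (gU + gs) with hgmid
      have hgmid1 : ‖gmid‖ ≤ 1 := by
        rw [hgmid, normP_smul, abs_of_nonneg (by norm_num : (0:ℝ) ≤ 2⁻¹)]
        have := norm_add_le gU gs
        nlinarith [norm_nonneg (gU + gs)]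
      have hgmid2 : (gmid : C(Y, F)) y = v := by
        rw [hgmid, coeP_smul, coeP_add]
        simp only [ContinuousMap.smul_apply, ContinuousMap.add_apply, hU2, hgs2]
        rw [← one_smul ℝ v, smul_add, ← add_smul, smul_smul]
        norm_num
      have h2 : ‖g + (gmid : C(Y, F))‖ = 2 := hB gmid hgmid1 hgmid2
      obtain ⟨z, hz⟩ := exists_norm_apply_eq (g + (gmid : C(Y, F)))
      rw [h2] at hz
      have hza : (g + (gmid : C(Y, F))) z
          = g z + (2⁻¹ : ℝ) • ((gU : C(Y, F)) z + (gs : C(Y, F)) z) := by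
        rw [ContinuousMap.add_apply, hgmid, coeP_smul, coeP_add]
        simp only [ContinuousMap.smul_apply, ContinuousMap.add_apply]
      have hb1 : ‖g z‖ ≤ 1 := le_trans (g.norm_coe_le_norm z) hgle
      have hb2 : ‖(gU : C(Y, F)) z‖ ≤ 1 := by
        refine le_trans (ContinuousMap.norm_coe_le_norm _ z) ?_
        rw [normP_coe, hU1]
      have hb3 : ‖(gs : C(Y, F)) z‖ ≤ 1 := by
        refine le_trans (ContinuousMap.norm_coe_le_norm _ z) ?_
        rw [normP_coe, hgs1]
      have hzU : z ∈ U := by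
        by_contra hzU
        have hlt := hU3 z hzU
        have : ‖(g + (gmid : C(Y, F))) z‖ < 2 := by
          rw [hza]
          calc ‖g z + (2⁻¹ : ℝ) • ((gU : C(Y, F)) z + (gs : C(Y, F)) z)‖
              ≤ ‖g z‖ + ‖(2⁻¹ : ℝ) • ((gU : C(Y, F)) z + (gs : C(Y, F)) z)‖ :=
                norm_add_le _ _
          _ ≤ ‖g z‖ + 2⁻¹ * (‖(gU : C(Y, F)) z‖ + ‖(gs : C(Y, F)) z‖) := by
                rw [norm_smul, Real.norm_eq_abs,
                  abs_of_nonneg (by norm_num : (0:ℝ) ≤ 2⁻¹)]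
                have := norm_add_le ((gU : C(Y, F)) z) ((gs : C(Y, F)) z)
                nlinarith
          _ < 2 := by nlinarith
        rw [hz] at this
        exact lt_irrefl _ this
      have hzD : z ∈ D := by
        have key : g z + (gs : C(Y, F)) z
            = (2:ℝ) • (g z + (2⁻¹ : ℝ) • ((gU : C(Y, F)) z + (gs : C(Y, F)) z))
              - (g z + (gU : C(Y, F)) z) := by
          module
        have hge : (2:ℝ) ≤ ‖g z + (gs : C(Y, F)) z‖ := by
          rw [key]
          have h4 : ‖(2:ℝ) • (g z + (2⁻¹ : ℝ) • ((gU : C(Y, F)) z + (gs : C(Y, F)) z))‖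
              = 4 := by
            rw [norm_smul, Real.norm_ofNat, ← hza, hz]
            norm_num
          have h5 : ‖g z + (gU : C(Y, F)) z‖ ≤ 2 := by
            have := norm_add_le (g z) ((gU : C(Y, F)) z)
            linarith
          calc (2:ℝ) = 4 - 2 := by norm_num
          _ ≤ ‖(2:ℝ) • (g z + (2⁻¹ : ℝ) • ((gU : C(Y, F)) z + (gs : C(Y, F)) z))‖
              - ‖g z + (gU : C(Y, F)) z‖ := by rw [h4]; linarith
          _ ≤ _ := norm_sub_norm_le _ _
        have hle2 : ‖g z + (gs : C(Y, F)) z‖ ≤ 2 := by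
          have := norm_add_le (g z) ((gs : C(Y, F)) z)
          linarith
        exact le_antisymm hle2 hge
      exact ⟨z, hzU, hzD⟩
    rwa [hDcl.closure_eq] at hcls
  have hfin : ‖v + g y‖ = 2 := by
    rw [hD, mem_setOf_eq, hgs2] at hyD
    rwa [add_comm] at hyD
  have hgy : ‖g y‖ ≤ 1 := le_trans (g.norm_coe_le_norm y) hgle
  exact hv.star hgy hfin

lemma exists_peaked_mem_Fset
    (hΘA : strongBoundaryPoints (A : Set C(X, E)) = Set.univ)
    (hΘB : strongBoundaryPoints (B : Set C(Y, F)) = Set.univ)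
    (hv : MaxConvexIn (sphere (0 : F) 1) {v}) [Nonempty Y]
    {y : Y} {x₀ : X} (hx₀ : x₀ ∈ Kset S v y) {U : Set X} (hU : U ∈ nhds x₀)
    {ε : ℝ} (hε : 0 < ε) :
    ∃ h : ↥A, h ∈ Fset S v y ∧ ‖h‖ = 1 ∧ ∀ x ∉ U, ‖(h : C(X, E)) x‖ < ε := by
  have hvn : ‖v‖ = 1 := by
    have := hv.1 (mem_singleton v); rwa [mem_sphere_zero_iff_norm] at this
  obtain ⟨g₀, hg₀⟩ := Fset_nonempty S hΘB hvn y
  have hu₀ : ‖(g₀ : C(X, E)) x₀‖ = 1 := hx₀ g₀ hg₀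
  obtain ⟨h, hh1, hh2, hh3⟩ := theta_spec hΘA x₀ hU hε hu₀
  have hmem : h ∈ Fset S v y := by
    refine ⟨hh1.le, ?_⟩
    apply char S hΘB hv hh1.le
    intro f' hf'
    have hmid := midpoint_mem_Fset S hg₀ hf'
    have hK := hx₀ _ hmid
    have hsum : ‖(g₀ : C(X, E)) x₀ + (f' : C(X, E)) x₀‖ = 2 := by
      rw [coeP_smul, coeP_add] at hK
      simp only [ContinuousMap.smul_apply, ContinuousMap.add_apply, norm_smul,
        Real.norm_eq_abs] at hK
      rw [abs_of_nonneg (by norm_num : (0:ℝ) ≤ 2⁻¹)] at hK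
      linarith
    have hge : (2:ℝ) ≤ ‖h + f'‖ := by
      have happ : ‖((h + f' : ↥A) : C(X, E)) x₀‖ = 2 := by
        rw [coeP_add, ContinuousMap.add_apply, hh2, hsum]
      calc (2:ℝ) = ‖((h + f' : ↥A) : C(X, E)) x₀‖ := happ.symm
      _ ≤ ‖((h + f' : ↥A) : C(X, E))‖ := ContinuousMap.norm_coe_le_norm _ x₀
      _ = ‖h + f'‖ := normP_coe _
    have hle : ‖h + f'‖ ≤ 2 := by
      have := norm_add_le h f'
      have hf'1 : ‖f'‖ ≤ 1 := hf'.1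
      linarith [hh1.le]
    linarith [hge, hle]
  exact ⟨h, hmem, hh1, hh3⟩

lemma Sval_eq_zero
    (hΘA : strongBoundaryPoints (A : Set C(X, E)) = Set.univ)
    (hΘB : strongBoundaryPoints (B : Set C(Y, F)) = Set.univ)
    (hv : MaxConvexIn (sphere (0 : F) 1) {v}) [Nonempty X] [Nonempty Y]
    {y : Y} {x₀ : X} (hx₀ : x₀ ∈ Kset S v y) {f : ↥A}
    (hf0 : (f : C(X, E)) x₀ = 0) :
    ((S f : ↥B) : C(Y, F)) y = 0 := by
  have hvn : ‖v‖ = 1 := by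
    have := hv.1 (mem_singleton v); rwa [mem_sphere_zero_iff_norm] at this
  rcases eq_or_ne f 0 with rfl | hfne
  · rw [map_zero]; simp
  have hc : 0 < ‖f‖ := norm_pos_iff.mpr hfne
  set f₁ : ↥A := (‖f‖⁻¹ : ℝ) • f with hf₁
  have hf₁n : ‖f₁‖ = 1 := by
    rw [hf₁, normP_smul, abs_of_nonneg (by positivity)]
    exact inv_mul_cancel₀ (ne_of_gt hc)
  have hf₁0 : (f₁ : C(X, E)) x₀ = 0 := by
    rw [hf₁, coeP_smul, ContinuousMap.smul_apply, hf0, smul_zero]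
  set w : F := ((S f₁ : ↥B) : C(Y, F)) y with hw
  have hwle : ‖w‖ ≤ 1 := by
    calc ‖w‖ ≤ ‖((S f₁ : ↥B) : C(Y, F))‖ := ContinuousMap.norm_coe_le_norm _ y
    _ = ‖S f₁‖ := normP_coe _
    _ = 1 := by rw [LinearIsometryEquiv.norm_map, hf₁n]
  have main : w = 0 := by
    have hbnd : ∀ δ : ℝ, 0 < δ → ‖v + w‖ ≤ 1 + δ ∧ ‖v - w‖ ≤ 1 + δ := by
      intro δ hδ
      set U : Set X := {x | ‖(f₁ : C(X, E)) x‖ < δ} with hUdef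
      have hUo : IsOpen U := isOpen_lt (continuous_norm.comp (map_continuous _))
        continuous_const
      have hx₀U : x₀ ∈ U := by
        rw [hUdef, mem_setOf_eq, hf₁0, norm_zero]; exact hδ
      obtain ⟨h, hhF, hh1, hh3⟩ := exists_peaked_mem_Fset S hΘA hΘB hv hx₀
        (hUo.mem_nhds hx₀U) hδ
      have hSh : ((S h : ↥B) : C(Y, F)) y = v := hhF.2
      have hbound : ∀ (q : ↥A), (∀ x : X, ‖(q : C(X,E)) x‖ ≤ 1 + δ) → ‖q‖ ≤ 1 + δ := by
        intro q hq
        rw [← normP_coe]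
        exact (ContinuousMap.norm_le _ (by linarith)).mpr hq
      have hptw : ∀ (σ : ℝ), |σ| = 1 → ∀ x : X,
          ‖((h + σ • f₁ : ↥A) : C(X,E)) x‖ ≤ 1 + δ := by
        intro σ hσ x
        have hx1 : ‖(h : C(X,E)) x‖ ≤ 1 := by
          refine le_trans (ContinuousMap.norm_coe_le_norm _ x) ?_
          rw [normP_coe, hh1]
        have hx2 : ‖(f₁ : C(X,E)) x‖ ≤ 1 := by
          refine le_trans (ContinuousMap.norm_coe_le_norm _ x) ?_
          rw [normP_coe, hf₁n]
        have happ : ((h + σ • f₁ : ↥A) : C(X,E)) x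
            = (h : C(X,E)) x + σ • (f₁ : C(X,E)) x := by
          rw [coeP_add, ContinuousMap.add_apply, coeP_smul, ContinuousMap.smul_apply]
        rw [happ]
        have hσn : ‖σ • (f₁ : C(X,E)) x‖ = ‖(f₁ : C(X,E)) x‖ := by
          rw [norm_smul, Real.norm_eq_abs, hσ, one_mul]
        by_cases hxU : x ∈ U
        · have : ‖(f₁ : C(X,E)) x‖ < δ := hxU
          calc ‖(h : C(X,E)) x + σ • (f₁ : C(X,E)) x‖
              ≤ ‖(h : C(X,E)) x‖ + ‖σ • (f₁ : C(X,E)) x‖ := norm_add_le _ _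
          _ ≤ 1 + δ := by rw [hσn]; linarith
        · have : ‖(h : C(X,E)) x‖ < δ := hh3 x hxU
          calc ‖(h : C(X,E)) x + σ • (f₁ : C(X,E)) x‖
              ≤ ‖(h : C(X,E)) x‖ + ‖σ • (f₁ : C(X,E)) x‖ := norm_add_le _ _
          _ ≤ 1 + δ := by rw [hσn]; linarith
      have key : ∀ (σ : ℝ), |σ| = 1 → ‖v + σ • w‖ ≤ 1 + δ := by
        intro σ hσ
        have h1 : v + σ • w = ((S (h + σ • f₁) : ↥B) : C(Y, F)) y := by
          rw [map_add, map_smul, coeP_add, ContinuousMap.add_apply,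
            coeP_smul, ContinuousMap.smul_apply, hSh, hw]
        calc ‖v + σ • w‖ = ‖((S (h + σ • f₁) : ↥B) : C(Y, F)) y‖ := by rw [h1]
        _ ≤ ‖((S (h + σ • f₁) : ↥B) : C(Y, F))‖ := ContinuousMap.norm_coe_le_norm _ y
        _ = ‖S (h + σ • f₁)‖ := normP_coe _
        _ = ‖h + σ • f₁‖ := LinearIsometryEquiv.norm_map _ _
        _ ≤ 1 + δ := hbound _ (hptw σ hσ)
      constructor
      · have := key 1 (by norm_num)
        rwa [one_smul] at this
      · have := key (-1) (by norm_num)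
        rw [neg_smul, one_smul, ← sub_eq_add_neg] at this
        exact this
    have h1 : ‖v + w‖ ≤ 1 := by
      refine le_of_forall_pos_le_add fun δ hδ => (hbnd δ hδ).1
    have h2 : ‖v - w‖ ≤ 1 := by
      refine le_of_forall_pos_le_add fun δ hδ => (hbnd δ hδ).2
    exact hv.extreme h1 h2
  have hSf : S f = (‖f‖ : ℝ) • S f₁ := by
    rw [hf₁, map_smul, smul_smul]
    rw [mul_inv_cancel₀ (ne_of_gt hc), one_smul]
  rw [hSf, coeP_smul, ContinuousMap.smul_apply, ← hw, main, smul_zero]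

lemma norm_Sval_le
    (hΘA : strongBoundaryPoints (A : Set C(X, E)) = Set.univ)
    (hΘB : strongBoundaryPoints (B : Set C(Y, F)) = Set.univ)
    (hv : MaxConvexIn (sphere (0 : F) 1) {v}) [Nonempty X] [Nonempty Y]
    {y : Y} {x₀ : X} (hx₀ : x₀ ∈ Kset S v y) (f : ↥A) :
    ‖((S f : ↥B) : C(Y, F)) y‖ ≤ ‖(f : C(X, E)) x₀‖ := by
  obtain ⟨h, hh1, hh2⟩ := exists_eq_at hΘA x₀ ((f : C(X, E)) x₀)
  have hdiff : ((f - h : ↥A) : C(X, E)) x₀ = 0 := by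
    rw [coeP_sub, ContinuousMap.sub_apply, hh1, sub_self]
  have hz := Sval_eq_zero S hΘA hΘB hv hx₀ hdiff
  have heq : ((S f : ↥B) : C(Y, F)) y = ((S h : ↥B) : C(Y, F)) y := by
    rw [map_sub, coeP_sub, ContinuousMap.sub_apply] at hz
    exact sub_eq_zero.mp hz
  calc ‖((S f : ↥B) : C(Y, F)) y‖ = ‖((S h : ↥B) : C(Y, F)) y‖ := by rw [heq]
  _ ≤ ‖((S h : ↥B) : C(Y, F))‖ := ContinuousMap.norm_coe_le_norm _ y
  _ = ‖S h‖ := normP_coe _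
  _ = ‖h‖ := LinearIsometryEquiv.norm_map _ _
  _ = ‖(f : C(X, E)) x₀‖ := hh2

lemma K_unique
    (hΘA : strongBoundaryPoints (A : Set C(X, E)) = Set.univ)
    (hΘB : strongBoundaryPoints (B : Set C(Y, F)) = Set.univ)
    (hu : MaxConvexIn (sphere (0 : E) 1) {u})
    (hv : MaxConvexIn (sphere (0 : F) 1) {v}) [Nonempty X] [Nonempty Y]
    {y y₀ : Y} {x₀ : X}
    (hx₀ : x₀ ∈ Kset S v y) (hy₀ : y₀ ∈ Kset S.symm u x₀) : y₀ = y := by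
  have hvn : ‖v‖ = 1 := by
    have := hv.1 (mem_singleton v); rwa [mem_sphere_zero_iff_norm] at this
  by_contra hne
  have hUnhds : ({y₀}ᶜ : Set Y) ∈ nhds y := compl_singleton_mem_nhds (Ne.symm hne)
  obtain ⟨g, hg1, hg2, hg3⟩ := theta_spec hΘB y hUnhds
    (by norm_num : (0:ℝ) < 2⁻¹) hvn
  have hf : S.symm g ∈ Fset S v y := by
    refine ⟨by rw [LinearIsometryEquiv.norm_map, hg1], ?_⟩
    rw [S.apply_symm_apply]; exact hg2
  have h1 : ‖((S.symm g : ↥A) : C(X, E)) x₀‖ = 1 := hx₀ _ hf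
  have h2 : ‖((S.symm g : ↥A) : C(X, E)) x₀‖ ≤ ‖(g : C(Y, F)) y₀‖ := by
    have := norm_Sval_le S.symm hΘB hΘA hu hy₀ g
    exact this
  have h3 : ‖(g : C(Y, F)) y₀‖ < 2⁻¹ := hg3 y₀ (by simp)
  rw [h1] at h2
  linarith

end MainAux

/-- If in addition the unit sphere of `E` also has a singleton maximal convex
subset, then `Φ` is a homeomorphism and all the `V_y` are surjective real-linear
isometries. -/
theorem stmt19 (v : F) (hv : MaxConvexIn (sphere (0 : F) 1) {v})
    (u : E) (hu : MaxConvexIn (sphere (0 : E) 1) {u})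
    (A : Subspace 𝕂 C(X, E)) (hAcl : IsClosed (A : Set C(X, E)))
    (hΘA : strongBoundaryPoints (A : Set C(X, E)) = Set.univ)
    (B : Subspace 𝕂 C(Y, F))
    (hΘB : strongBoundaryPoints (B : Set C(Y, F)) = Set.univ)
    (T : C(X, E) → C(Y, F))
    (hmap : ∀ f ∈ A, T f ∈ B)
    (hsurj : ∀ g ∈ B, ∃ f ∈ A, T f = g)
    (hiso : ∀ f ∈ A, ∀ g ∈ A, ‖T f - T g‖ = ‖f - g‖) :
    ∃ (Φ : Y ≃ₜ X) (V : Y → (E →ₗᵢ[ℝ] F)),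
      (∀ y : Y, Function.Surjective (V y)) ∧
      (∀ f ∈ A, ∀ y : Y, T f y = T 0 y + V y (f (Φ y))) := by
  classical
  have hvn : ‖v‖ = 1 := by
    have := hv.1 (mem_singleton v); rwa [mem_sphere_zero_iff_norm] at this
  have hun : ‖u‖ = 1 := by
    have := hu.1 (mem_singleton u); rwa [mem_sphere_zero_iff_norm] at this
  by_cases hY : IsEmpty Y
  · -- degenerate case: both spaces empty
    haveI := hY
    have hXe : IsEmpty X := by
      by_contra hX
      haveI hXne : Nonempty X := not_isEmpty_iff.mp hX
      obtain ⟨x⟩ := hXne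
      obtain ⟨f, hf1, -, -⟩ := theta_spec (P := A) hΘA x Filter.univ_mem one_pos hun
      haveI : Subsingleton C(Y, F) :=
        ⟨fun a b => ContinuousMap.ext fun y => isEmptyElim y⟩
      have he : T ↑f = T 0 := Subsingleton.elim _ _
      have hh := hiso ↑f f.2 0 A.zero_mem
      rw [he, sub_self, sub_zero] at hh
      rw [norm_zero] at hh
      rw [normP_coe, hf1] at hh
      exact one_ne_zero hh.symm
    haveI := hXe
    refine ⟨⟨Equiv.equivOfIsEmpty Y X,
      continuous_iff_continuousAt.mpr fun y => isEmptyElim y,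
      continuous_iff_continuousAt.mpr fun x => isEmptyElim x⟩,
      fun y => isEmptyElim y, fun y => isEmptyElim y, fun f hf y => isEmptyElim y⟩
  -- main case
  haveI hYne : Nonempty Y := not_isEmpty_iff.mp hY
  haveI hXne : Nonempty X := by
    by_contra hX
    haveI hXe : IsEmpty X := not_nonempty_iff.mp hX
    haveI : Subsingleton C(X, E) :=
      ⟨fun a b => ContinuousMap.ext fun x => isEmptyElim x⟩
    obtain ⟨y⟩ := hYne
    obtain ⟨g, hg1, -, -⟩ := theta_spec (P := B) hΘB y Filter.univ_mem one_pos hvn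
    obtain ⟨f, -, hTf⟩ := hsurj ↑g g.2
    obtain ⟨f0, -, hTf0⟩ := hsurj 0 B.zero_mem
    have : (g : C(Y, F)) = 0 := by
      rw [← hTf, Subsingleton.elim f f0, hTf0]
    have hz : ‖g‖ = 0 := by rw [← normP_coe, this, norm_zero]
    rw [hg1] at hz
    exact one_ne_zero hz
  -- the isometry
  set e0 : ↥A → ↥B := fun f =>
    ⟨T ↑f - T 0, B.sub_mem (hmap ↑f f.2) (hmap 0 A.zero_mem)⟩ with he0
  have he0iso : Isometry e0 := by
    refine Isometry.of_dist_eq fun f g => ?_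
    have h1 : dist (e0 f) (e0 g) = ‖(T ↑f - T 0) - (T ↑g - T 0)‖ := by
      rw [Subtype.dist_eq, dist_eq_norm]
    have h2 : (T ↑f - T 0) - (T ↑g - T 0) = T ↑f - T ↑g := by abel
    rw [h1, h2, hiso ↑f f.2 ↑g g.2, Subtype.dist_eq, dist_eq_norm]
  have he0surj : Function.Surjective e0 := by
    intro g
    obtain ⟨f, hfA, hTf⟩ := hsurj (↑g + T 0) (B.add_mem g.2 (hmap 0 A.zero_mem))
    refine ⟨⟨f, hfA⟩, Subtype.ext ?_⟩
    show T f - T 0 = ↑g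
    rw [hTf]; abel
  set e : ↥A ≃ᵢ ↥B :=
    ⟨Equiv.ofBijective e0 ⟨he0iso.injective, he0surj⟩, he0iso⟩ with he
  have he00 : e 0 = 0 := by
    apply Subtype.ext
    show T (0 : ↥A) - T 0 = (0 : C(Y, F))
    have : ((0 : ↥A) : C(X, E)) = 0 := rfl
    rw [this, sub_self]
  set S : ↥A ≃ₗᵢ[ℝ] ↥B := e.toRealLinearIsometryEquivOfMapZero he00 with hS
  have hSapp : ∀ f : ↥A, ((S f : ↥B) : C(Y, F)) = T ↑f - T 0 := by
    intro f
    have h1 : S f = e f := by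
      rw [hS]
      exact congrFun (e.coe_toRealLinearIsometryEquivOfMapZero he00) f
    rw [h1]
    rfl
  -- the point maps
  set Φ0 : Y → X := fun y => (Kset_nonempty S hΘB hvn y).choose with hΦ0def
  have hΦ0 : ∀ y, Φ0 y ∈ Kset S v y := fun y => (Kset_nonempty S hΘB hvn y).choose_spec
  set Ψ0 : X → Y := fun x => (Kset_nonempty S.symm hΘA hun x).choose with hΨ0def
  have hΨ0 : ∀ x, Ψ0 x ∈ Kset S.symm u x :=
    fun x => (Kset_nonempty S.symm hΘA hun x).choose_spec
  have hleft : ∀ y, Ψ0 (Φ0 y) = y :=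
    fun y => K_unique S hΘA hΘB hu hv (hΦ0 y) (hΨ0 (Φ0 y))
  have hright : ∀ x, Φ0 (Ψ0 x) = x := by
    intro x
    have h2 : Φ0 (Ψ0 x) ∈ Kset S.symm.symm v (Ψ0 x) := by
      rw [LinearIsometryEquiv.symm_symm]
      exact hΦ0 (Ψ0 x)
    exact K_unique S.symm hΘB hΘA hv hu (hΨ0 x) h2
  -- norm identity
  have hnorm : ∀ (y : Y) (f : ↥A),
      ‖((S f : ↥B) : C(Y, F)) y‖ = ‖(f : C(X, E)) (Φ0 y)‖ := by
    intro y f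
    refine le_antisymm (norm_Sval_le S hΘA hΘB hv (hΦ0 y) f) ?_
    have h1 : ‖(f : C(X, E)) (Φ0 y)‖
        = ‖((S.symm (S f) : ↥A) : C(X, E)) (Φ0 y)‖ := by
      rw [S.symm_apply_apply]
    have h2 := norm_Sval_le S.symm hΘB hΘA hu (hΨ0 (Φ0 y)) (S f)
    rw [h1]
    rw [hleft y] at h2
    exact h2
  -- construction of V
  choose fw hfw1 hfw2 using fun (y : Y) (w : E) => exists_eq_at hΘA (Φ0 y) w
  set Vmap : Y → E → F := fun y w => ((S (fw y w) : ↥B) : C(Y, F)) y with hVmap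
  have hwd : ∀ (y : Y) (f : ↥A),
      Vmap y ((f : C(X, E)) (Φ0 y)) = ((S f : ↥B) : C(Y, F)) y := by
    intro y f
    set w := (f : C(X, E)) (Φ0 y)
    have hdiff : ((f - fw y w : ↥A) : C(X, E)) (Φ0 y) = 0 := by
      rw [coeP_sub, ContinuousMap.sub_apply, hfw1 y w, sub_self]
    have hz := Sval_eq_zero S hΘA hΘB hv (hΦ0 y) hdiff
    rw [map_sub, coeP_sub, ContinuousMap.sub_apply] at hz
    have := sub_eq_zero.mp hz
    rw [hVmap]
    exact this.symm
  have hVadd : ∀ (y : Y) (w w' : E), Vmap y (w + w') = Vmap y w + Vmap y w' := by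
    intro y w w'
    have hval : ((fw y w + fw y w' : ↥A) : C(X, E)) (Φ0 y) = w + w' := by
      rw [coeP_add, ContinuousMap.add_apply, hfw1, hfw1]
    have h1 := hwd y (fw y w + fw y w')
    rw [hval] at h1
    rw [h1, map_add, coeP_add, ContinuousMap.add_apply]
  have hVsmul : ∀ (y : Y) (r : ℝ) (w : E), Vmap y (r • w) = r • Vmap y w := by
    intro y r w
    have hval : ((r • fw y w : ↥A) : C(X, E)) (Φ0 y) = r • w := by
      rw [coeP_smul, ContinuousMap.smul_apply, hfw1]
    have h1 := hwd y (r • fw y w)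
    rw [hval] at h1
    rw [h1, map_smul, coeP_smul, ContinuousMap.smul_apply]
  have hVnorm : ∀ (y : Y) (w : E), ‖Vmap y w‖ = ‖w‖ := by
    intro y w
    rw [hVmap]
    rw [hnorm y (fw y w), hfw1]
  set V : Y → (E →ₗᵢ[ℝ] F) := fun y =>
    { toFun := Vmap y
      map_add' := hVadd y
      map_smul' := hVsmul y
      norm_map' := hVnorm y } with hV
  have hVsurj : ∀ y : Y, Function.Surjective (V y) := by
    intro y z
    obtain ⟨g, hg1, hg2⟩ := exists_eq_at hΘB y z
    refine ⟨((S.symm g : ↥A) : C(X, E)) (Φ0 y), ?_⟩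
    have h1 := hwd y (S.symm g)
    have h2 : ((S (S.symm g) : ↥B) : C(Y, F)) y = z := by
      rw [S.apply_symm_apply]; exact hg1
    show Vmap y _ = z
    rw [h1, h2]
  -- continuity of Φ0
  have hcont : Continuous Φ0 := by
    rw [continuous_def]
    intro O hO
    rw [isOpen_iff_mem_nhds]
    intro y hyO
    obtain ⟨h, hhF, hh1, hh3⟩ := exists_peaked_mem_Fset S hΘA hΘB hv (hΦ0 y)
      (hO.mem_nhds hyO) (by norm_num : (0:ℝ) < 2⁻¹)
    set W := {y' : Y | (2⁻¹ : ℝ) < ‖((S h : ↥B) : C(Y, F)) y'‖} with hW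
    have hWo : IsOpen W := isOpen_lt continuous_const
      (continuous_norm.comp (map_continuous _))
    have hyW : y ∈ W := by
      rw [hW, mem_setOf_eq, hhF.2, hvn]
      norm_num
    have hWsub : W ⊆ Φ0 ⁻¹' O := by
      intro y' hy'
      rw [hW, mem_setOf_eq] at hy'
      rw [mem_preimage]
      by_contra hnot
      have hsmall := hh3 (Φ0 y') hnot
      rw [hnorm y' h] at hy'
      linarith
    exact Filter.mem_of_superset (hWo.mem_nhds hyW) hWsub
  set Φeq : Y ≃ X := ⟨Φ0, Ψ0, hleft, hright⟩ with hΦeq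
  set Φh : Y ≃ₜ X := hcont.homeoOfEquivCompactToT2 (f := Φeq) with hΦh
  refine ⟨Φh, V, hVsurj, ?_⟩
  intro f hf y
  have hΦhy : Φh y = Φ0 y := rfl
  rw [hΦhy]
  have h2 := hwd y ⟨f, hf⟩
  have h3 : ((S ⟨f, hf⟩ : ↥B) : C(Y, F)) y = T f y - T 0 y := by
    rw [hSapp ⟨f, hf⟩]
    rfl
  show T f y = T 0 y + Vmap y (f (Φ0 y))
  have h4 : (( (⟨f, hf⟩ : ↥A) : C(X, E))) = f := rfl
  rw [h4] at h2
  rw [h2, h3]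
  abel
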